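/- Let g ∈ GL(d,ℝ). If the gap distance between the direction of maximum growth u(g) and the hyperplane of least growth s(g) satisfies d(u(g), s(g)) > 2√(a₂(g)/a₁(g)), then d(u(g), s(g))/2 ≤ ρ(g)/‖g‖, where ρ(g) is the spectral radius of g. -/

import Mathlib

open scoped RealInnerProductSpace
open Filter

noncomputable section

/-- Euclidean space `ℝ^d`. -/
abbrev E (d : ℕ) := EuclideanSpace ℝ (Fin d)

/-- The operator norm of a `d × d` real matrix, acting on Euclidean space. -/
def opNorm {d : ℕ} (g : Matrix (Fin d) (Fin d) ℝ) : ℝ :=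
  ‖(Matrix.toEuclideanLin g).toContinuousLinearMap‖

/-- The action of a matrix on a Euclidean vector. -/
def act {d : ℕ} (g : Matrix (Fin d) (Fin d) ℝ) (v : E d) : E d :=
  Matrix.toEuclideanLin g v

/-- The norm of `v ∧ w` in `Λ² ℝ^d`. -/
def wedgeNorm {d : ℕ} (v w : E d) : ℝ :=
  Real.sqrt (‖v‖ ^ 2 * ‖w‖ ^ 2 - ⟪v, w⟫ ^ 2)

/-- The gap distance `d(v̄, w̄) = ‖v ∧ w‖ / (‖v‖ ‖w‖)` on projective space. -/
def gapDist {d : ℕ} (v w : E d) : ℝ := wedgeNorm v w / (‖v‖ * ‖w‖)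

/-- The operator norm of `Λ² g`, computed on the decomposable generators coming from
orthonormal pairs. -/
def lam2Norm {d : ℕ} (g : Matrix (Fin d) (Fin d) ℝ) : ℝ :=
  sSup {r | ∃ v w : E d, ‖v‖ = 1 ∧ ‖w‖ = 1 ∧ ⟪v, w⟫ = 0 ∧
    r = wedgeNorm (act g v) (act g w)}

/-- Spectral radius: the maximal absolute value of the complex eigenvalues. -/
def specRad {d : ℕ} (g : Matrix (Fin d) (Fin d) ℝ) : ℝ :=
  sSup ((fun z : ℂ => ‖z‖) '' spectrum ℂ (g.map (algebraMap ℝ ℂ)))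

/-- Singular value decomposition data: `g = L Δ R` with `L, R` orthogonal and
`Δ = diagonal a`, the `a i` positive and in decreasing order (so `a i = a_{i+1}(g)`). -/
structure SVD {d : ℕ} (g : Matrix (Fin d) (Fin d) ℝ) (L : Matrix (Fin d) (Fin d) ℝ)
    (a : Fin d → ℝ) (R : Matrix (Fin d) (Fin d) ℝ) : Prop where
  orthL : L * L.transpose = 1
  orthR : R * R.transpose = 1
  anti : Antitone a
  pos : ∀ i, 0 < a i
  eq : g = L * Matrix.diagonal a * R

/-- The `i`-th standard basis vector of `ℝ^d`. -/
def stdVec {d : ℕ} (i : Fin d) : E d := EuclideanSpace.single i 1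

/-! ### Auxiliary lemmas -/

namespace Stmt4Aux

open scoped ENNReal NNReal

variable {d : ℕ}

lemma act_apply (g : Matrix (Fin d) (Fin d) ℝ) (v : E d) (i : Fin d) :
    act g v i = g.mulVec v i := rfl

lemma inner_euclid (x y : E d) : ⟪x, y⟫ = ∑ i, x i * y i := by
  simp [PiLp.inner_apply, RCLike.inner_apply, mul_comm]

lemma inner_eq_dot (x y : E d) : ⟪x, y⟫ = dotProduct (x : Fin d → ℝ) y := by
  rw [inner_euclid]; rfl

lemma act_act (g h' : Matrix (Fin d) (Fin d) ℝ) (v : E d) :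
    act g (act h' v) = act (g * h') v := by
  ext i
  show g.mulVec (h'.mulVec v) i = (g * h').mulVec v i
  rw [Matrix.mulVec_mulVec]

lemma act_one (v : E d) : act 1 v = v := by
  ext i; show (1 : Matrix (Fin d) (Fin d) ℝ).mulVec v i = v i
  rw [Matrix.one_mulVec]

lemma act_smul (g : Matrix (Fin d) (Fin d) ℝ) (c : ℝ) (v : E d) :
    act g (c • v) = c • act g v := by simp [act]

lemma inner_act_left (g : Matrix (Fin d) (Fin d) ℝ) (x y : E d) :
    ⟪act g x, y⟫ = ⟪x, act g.transpose y⟫ := by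
  rw [inner_eq_dot, inner_eq_dot]
  show dotProduct (g.mulVec x) y = dotProduct x (g.transpose.mulVec y)
  rw [Matrix.mulVec_transpose, dotProduct_comm, Matrix.dotProduct_mulVec,
    dotProduct_comm]

lemma inner_orth (Q : Matrix (Fin d) (Fin d) ℝ) (hQ : Q.transpose * Q = 1) (x y : E d) :
    ⟪act Q x, act Q y⟫ = ⟪x, y⟫ := by
  rw [inner_act_left, act_act, hQ, act_one]

lemma norm_act_orth (Q : Matrix (Fin d) (Fin d) ℝ) (hQ : Q.transpose * Q = 1) (x : E d) :
    ‖act Q x‖ = ‖x‖ := by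
  have := inner_orth Q hQ x x
  rw [real_inner_self_eq_norm_sq, real_inner_self_eq_norm_sq] at this
  nlinarith [norm_nonneg (act Q x), norm_nonneg x]

lemma norm_sq_euclid (x : E d) : ‖x‖ ^ 2 = ∑ i, x i ^ 2 := by
  rw [← real_inner_self_eq_norm_sq, inner_euclid]; simp [sq]

lemma inner_stdVec (x : E d) (i : Fin d) : ⟪x, stdVec i⟫ = x i := by
  rw [inner_euclid, stdVec]
  rw [Finset.sum_eq_single i]
  · simp
  · intro j _ hj; simp [EuclideanSpace.single_apply, hj]
  · simp

lemma norm_stdVec (i : Fin d) : ‖stdVec i‖ = 1 := by simp [stdVec]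

lemma act_diag_apply (a : Fin d → ℝ) (w : E d) (i : Fin d) :
    act (Matrix.diagonal a) w i = a i * w i := by
  rw [act_apply, Matrix.mulVec_diagonal]

/-! ### Scalar lemmas -/

lemma scalar1 (b t m : ℝ) (hb0 : 0 < b) (hb1 : b ≤ 1)
    (ht : 1 - b ^ 2 / 4 ≤ t ^ 2) (ht1 : t ^ 2 ≤ 1)
    (hm : b * |t| - Real.sqrt (1 - t ^ 2) * Real.sqrt (1 - b ^ 2) ≤ |m|) :
    b / 2 ≤ |m| := by
  have hs : Real.sqrt (1 - b ^ 2) ≤ 1 := by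
    rw [Real.sqrt_le_one]; nlinarith
  have hs0 : 0 ≤ Real.sqrt (1 - b ^ 2) := Real.sqrt_nonneg _
  have hs2 : Real.sqrt (1 - b ^ 2) ^ 2 = 1 - b ^ 2 := Real.sq_sqrt (by nlinarith)
  have hts : Real.sqrt (1 - t ^ 2) ≤ b / 2 := by
    have : (1 : ℝ) - t ^ 2 ≤ (b / 2) ^ 2 := by nlinarith
    calc Real.sqrt (1 - t ^ 2) ≤ Real.sqrt ((b / 2) ^ 2) := Real.sqrt_le_sqrt this
    _ = b / 2 := by rw [Real.sqrt_sq (by positivity)]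
  have hx0 : 0 ≤ Real.sqrt (1 - b ^ 2 / 4) := Real.sqrt_nonneg _
  have hx2 : Real.sqrt (1 - b ^ 2 / 4) ^ 2 = 1 - b ^ 2 / 4 := Real.sq_sqrt (by nlinarith)
  have hxt : Real.sqrt (1 - b ^ 2 / 4) ≤ |t| := by
    have := Real.sqrt_le_sqrt ht
    rwa [Real.sqrt_sq_eq_abs] at this
  have hkey : 1 + Real.sqrt (1 - b ^ 2) ≤ 2 * Real.sqrt (1 - b ^ 2 / 4) := by
    nlinarith [hx2, hs2, hs0, hx0, hs]
  have h2 : Real.sqrt (1 - t ^ 2) * Real.sqrt (1 - b ^ 2) ≤ (b / 2) * Real.sqrt (1 - b ^ 2) :=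
    mul_le_mul_of_nonneg_right hts hs0
  have h3 : b * Real.sqrt (1 - b ^ 2 / 4) ≤ b * |t| :=
    mul_le_mul_of_nonneg_left hxt hb0.le
  nlinarith [hkey]

lemma scalar2 (b m a0 a1 : ℝ) (hb0 : 0 < b) (hb1 : b ≤ 1)
    (hm1 : b ^ 2 / 4 ≤ m ^ 2) (hm2 : m ^ 2 ≤ 1)
    (ha1 : 0 < a1) (ha0 : 0 < a0) (hq : a1 < a0 * b ^ 2 / 4) :
    (1 - b ^ 2 / 4) * (a0 ^ 2 * m ^ 2 + a1 ^ 2 * (1 - m ^ 2)) ≤ a0 ^ 2 * m ^ 2 := by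
  have h1 : a1 ^ 2 < (a0 * b ^ 2 / 4) ^ 2 := by nlinarith
  have h2 : (a0 * b ^ 2 / 4) ^ 2 ≤ b ^ 2 / 4 * a0 ^ 2 * m ^ 2 := by
    have hnn : (0:ℝ) ≤ b ^ 2 / 4 * a0 ^ 2 := by positivity
    nlinarith [mul_le_mul_of_nonneg_left hm1 hnn]
  have h3 : (1 - b ^ 2 / 4) * (a1 ^ 2 * (1 - m ^ 2)) ≤ a1 ^ 2 := by
    have hP : (0:ℝ) ≤ a1 ^ 2 * (1 - m ^ 2) := mul_nonneg (sq_nonneg a1) (by nlinarith)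
    have hPle : a1 ^ 2 * (1 - m ^ 2) ≤ a1 ^ 2 := by nlinarith [sq_nonneg a1]
    nlinarith [mul_nonneg hP (by positivity : (0:ℝ) ≤ b ^ 2 / 4)]
  nlinarith [h1, h2, h3]

lemma cs_bound (u n v : E d) (hu : ‖u‖ = 1) (hn : ‖n‖ = 1) (hv : ‖v‖ = 1) :
    |⟪u, n⟫| * |⟪v, u⟫| - Real.sqrt (1 - ⟪v, u⟫ ^ 2) * Real.sqrt (1 - ⟪u, n⟫ ^ 2)
      ≤ |⟪v, n⟫| := by
  set t := ⟪v, u⟫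
  set c := ⟪u, n⟫
  set m := ⟪v, n⟫
  have huu : ⟪u, u⟫ = 1 := by rw [real_inner_self_eq_norm_sq, hu]; norm_num
  have h1 : ⟪v - t • u, n - c • u⟫ = m - t * c := by
    rw [inner_sub_left, inner_sub_right, inner_sub_right, real_inner_smul_left,
      real_inner_smul_left, real_inner_smul_right, real_inner_smul_right, huu]
    have e1 : ⟪v, u⟫ = t := rfl
    have e2 : ⟪u, n⟫ = c := rfl
    have e3 : ⟪v, n⟫ = m := rfl
    rw [e1, e2, e3]
    ring
  have h2 : ‖v - t • u‖ ^ 2 = 1 - t ^ 2 := by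
    rw [norm_sub_sq_real, real_inner_smul_right, norm_smul, hv, hu]
    have : ⟪v, u⟫ = t := rfl
    simp [this, Real.norm_eq_abs, sq_abs]
    ring
  have h3 : ‖n - c • u‖ ^ 2 = 1 - c ^ 2 := by
    rw [norm_sub_sq_real, real_inner_smul_right, norm_smul, hn, hu]
    have hnu : ⟪n, u⟫ = c := by rw [real_inner_comm]
    rw [hnu, Real.norm_eq_abs, mul_one, sq_abs]
    ring
  have hcs : |m - t * c| ≤ Real.sqrt (1 - t ^ 2) * Real.sqrt (1 - c ^ 2) := by
    have := abs_real_inner_le_norm (v - t • u) (n - c • u)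
    rw [h1] at this
    have e2 : ‖v - t • u‖ = Real.sqrt (1 - t ^ 2) := by
      rw [← h2, Real.sqrt_sq (norm_nonneg _)]
    have e3 : ‖n - c • u‖ = Real.sqrt (1 - c ^ 2) := by
      rw [← h3, Real.sqrt_sq (norm_nonneg _)]
    rwa [e2, e3] at this
  have habs : |t * c| - |m| ≤ |m - t * c| := by
    have := abs_sub_abs_le_abs_sub (t * c) m
    have h' : |t * c - m| = |m - t * c| := abs_sub_comm _ _
    linarith [this, h'.le, h'.ge]
  rw [abs_mul] at habs
  linarith [hcs, habs, abs_mul t c]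

/-! ### SVD computations -/

section svd
variable {g L R : Matrix (Fin d) (Fin d) ℝ} {a : Fin d → ℝ} (h : SVD g L a R)
include h

lemma orthL' : L.transpose * L = 1 := mul_eq_one_comm.mp h.orthL

lemma orthR' : R.transpose * R = 1 := mul_eq_one_comm.mp h.orthR

lemma orthRT : (R.transpose).transpose * R.transpose = 1 := by
  rw [Matrix.transpose_transpose]; exact h.orthR

lemma act_g_eq (v : E d) :
    act g v = act L (act (Matrix.diagonal a) (act R v)) := by
  rw [act_act, act_act, ← h.eq]

lemma inner_act_u (i0 : Fin d) (v : E d) :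
    ⟪act g v, act L (stdVec i0)⟫ =
      a i0 * ⟪v, act R.transpose (stdVec i0)⟫ := by
  rw [act_g_eq h, inner_orth L (orthL' h), ← inner_act_left]
  rw [inner_stdVec, act_diag_apply]
  congr 1
  rw [← inner_stdVec (act R v) i0]

lemma norm_act_g_sq (v : E d) :
    ‖act g v‖ ^ 2 = ∑ i, (a i * act R v i) ^ 2 := by
  rw [act_g_eq h, norm_act_orth L (orthL' h), norm_sq_euclid]
  congr 1; funext i; rw [act_diag_apply]

lemma norm_Rv (v : E d) : ‖v‖ ^ 2 = ∑ i, (act R v i) ^ 2 := by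
  rw [← norm_act_orth R (orthR' h) v, norm_sq_euclid]

lemma norm_act_g_le (i0 : Fin d) (hi0 : (i0 : ℕ) = 0) (v : E d) :
    ‖act g v‖ ≤ a i0 * ‖v‖ := by
  have ha0 := h.pos i0
  have h1 : ‖act g v‖ ^ 2 ≤ (a i0) ^ 2 * ‖v‖ ^ 2 := by
    rw [norm_act_g_sq h, norm_Rv h, Finset.mul_sum]
    apply Finset.sum_le_sum
    intro i _
    have hai : a i ≤ a i0 := h.anti (by simp [Fin.le_def, hi0])
    have hsq : a i ^ 2 ≤ a i0 ^ 2 := pow_le_pow_left₀ (h.pos i).le hai 2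
    nlinarith [sq_nonneg (act R v i)]
  have h2 : 0 ≤ a i0 * ‖v‖ := mul_nonneg ha0.le (norm_nonneg v)
  nlinarith [norm_nonneg (act g v)]

lemma norm_act_g_sq_le (i0 i1 : Fin d) (hi0 : (i0 : ℕ) = 0) (hi1 : (i1 : ℕ) = 1) (v : E d) :
    ‖act g v‖ ^ 2 ≤ (a i0) ^ 2 * ⟪v, act R.transpose (stdVec i0)⟫ ^ 2
      + (a i1) ^ 2 * (‖v‖ ^ 2 - ⟪v, act R.transpose (stdVec i0)⟫ ^ 2) := by
  have hm : ⟪v, act R.transpose (stdVec i0)⟫ = act R v i0 := by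
    rw [← inner_act_left, inner_stdVec]
  rw [norm_act_g_sq h, hm, norm_Rv h]
  rw [← Finset.add_sum_erase _ _ (Finset.mem_univ i0),
      ← Finset.add_sum_erase _ _ (Finset.mem_univ i0)]
  have key : ∑ i ∈ Finset.univ.erase i0, (a i * act R v i) ^ 2
      ≤ (a i1) ^ 2 * ∑ i ∈ Finset.univ.erase i0, (act R v i) ^ 2 := by
    rw [Finset.mul_sum]
    apply Finset.sum_le_sum
    intro i hi
    have hine : i ≠ i0 := Finset.ne_of_mem_erase hi
    have hai : a i ≤ a i1 := by
      apply h.anti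
      have hne : (i : ℕ) ≠ 0 := by
        intro hc; exact hine (Fin.ext (by omega))
      simp [Fin.le_def, hi1]; omega
    have hsq : a i ^ 2 ≤ a i1 ^ 2 := pow_le_pow_left₀ (h.pos i).le hai 2
    nlinarith [sq_nonneg (act R v i)]
  have expand : (a i0 * act R v i0) ^ 2 = (a i0) ^ 2 * (act R v i0) ^ 2 := by ring
  nlinarith [key]

lemma norm_u (i0 : Fin d) : ‖act L (stdVec i0)‖ = 1 := by
  rw [norm_act_orth L (orthL' h), norm_stdVec]

lemma norm_n (i0 : Fin d) : ‖act R.transpose (stdVec i0)‖ = 1 := by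
  rw [norm_act_orth R.transpose (orthRT h), norm_stdVec]

end svd

/-! ### Spectral radius from norm growth -/

lemma specRad_ge (g : Matrix (Fin d) (Fin d) ℝ) (u : E d) (hu : ‖u‖ = 1)
    (r : ℝ) (hr : 0 < r) (hiter : ∀ n : ℕ, r ^ n ≤ ‖act (g ^ n) u‖) :
    r ≤ specRad g := by
  classical
  set M : Matrix (Fin d) (Fin d) ℂ := g.map (algebraMap ℝ ℂ) with hM
  set T : EuclideanSpace ℂ (Fin d) →L[ℂ] EuclideanSpace ℂ (Fin d) :=
    Matrix.toEuclideanCLM (𝕜 := ℂ) M with hT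
  set uc : EuclideanSpace ℂ (Fin d) := (WithLp.equiv 2 (Fin d → ℂ)).symm (fun i => (u i : ℂ))
    with huc
  have hucn : ‖uc‖ = 1 := by
    rw [EuclideanSpace.norm_eq, ← hu, EuclideanSpace.norm_eq]
    congr 1
    apply Finset.sum_congr rfl
    intro i _
    simp [huc]
  have hTn : ∀ n : ℕ, ‖(T ^ n) uc‖ = ‖act (g ^ n) u‖ := by
    intro n
    have hMn : M ^ n = (g ^ n).map (algebraMap ℝ ℂ) := by
      rw [hM]
      have := (map_pow ((algebraMap ℝ ℂ).mapMatrix) g n).symm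
      simpa [RingHom.mapMatrix_apply] using this
    have hTn' : T ^ n = Matrix.toEuclideanCLM (𝕜 := ℂ) (M ^ n) := by
      rw [hT, ← map_pow]
    have hold : ∀ (A : Matrix (Fin d) (Fin d) ℂ) (x : Fin d → ℂ), Matrix.toEuclideanCLM (𝕜 := ℂ) A
        ((WithLp.equiv 2 (Fin d → ℂ)).symm x) = (WithLp.equiv 2 (Fin d → ℂ)).symm (Matrix.toLin' A x) :=
      fun A x => rfl
    rw [hTn', hMn, huc, hold]
    rw [EuclideanSpace.norm_eq, EuclideanSpace.norm_eq]
    congr 1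
    apply Finset.sum_congr rfl
    intro i _
    have hentry : Matrix.toLin' ((g ^ n).map (algebraMap ℝ ℂ)) (fun i => (u i : ℂ)) i
        = ((((g ^ n).mulVec u) i : ℝ) : ℂ) := by
      rw [Matrix.toLin'_apply]
      simp only [Matrix.mulVec, dotProduct, Matrix.map_apply]
      push_cast
      rfl
    rw [show ((WithLp.equiv 2 (Fin d → ℂ)).symm
        (Matrix.toLin' ((g ^ n).map (algebraMap ℝ ℂ)) fun i => (u i : ℂ))) i
        = Matrix.toLin' ((g ^ n).map (algebraMap ℝ ℂ)) (fun i => (u i : ℂ)) i from rfl]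
    rw [hentry]
    rw [show act (g ^ n) u i = ((g ^ n).mulVec u) i from rfl]
    simp
  haveI : Nontrivial (EuclideanSpace ℂ (Fin d) →L[ℂ] EuclideanSpace ℂ (Fin d)) := by
    refine ⟨1, 0, fun hc => ?_⟩
    have h1 : (1 : EuclideanSpace ℂ (Fin d) →L[ℂ] EuclideanSpace ℂ (Fin d)) uc = uc := rfl
    have h0 : (0 : EuclideanSpace ℂ (Fin d) →L[ℂ] EuclideanSpace ℂ (Fin d)) uc = 0 := rfl
    rw [hc, h0] at h1
    rw [← h1] at hucn
    simp at hucn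
  have hlow : ∀ᶠ n : ℕ in atTop,
      ENNReal.ofReal r ≤ (‖T ^ n‖₊ : ℝ≥0∞) ^ (1 / (n : ℝ)) := by
    filter_upwards [eventually_ge_atTop 1] with n hn
    have hn0 : (n : ℝ) ≠ 0 := by positivity
    have h1 : r ^ n ≤ ‖T ^ n‖ := by
      calc r ^ n ≤ ‖act (g ^ n) u‖ := hiter n
      _ = ‖(T ^ n) uc‖ := (hTn n).symm
      _ ≤ ‖T ^ n‖ * ‖uc‖ := (T ^ n).le_opNorm uc
      _ = ‖T ^ n‖ := by rw [hucn, mul_one]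
    have h2 : ENNReal.ofReal (r ^ n) ≤ (‖T ^ n‖₊ : ℝ≥0∞) := by
      rw [show (‖T ^ n‖₊ : ℝ≥0∞) = ENNReal.ofReal ‖T ^ n‖ from (ofReal_norm _).symm]
      exact ENNReal.ofReal_le_ofReal h1
    have h3 : ENNReal.ofReal r = ENNReal.ofReal (r ^ n) ^ (1 / (n : ℝ)) := by
      rw [ENNReal.ofReal_rpow_of_pos (by positivity)]
      congr 1
      rw [← Real.rpow_natCast r n, ← Real.rpow_mul hr.le]
      rw [mul_one_div_cancel hn0, Real.rpow_one]
    rw [h3]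
    exact ENNReal.rpow_le_rpow h2 (by positivity)
  have hgelfand := spectrum.pow_nnnorm_pow_one_div_tendsto_nhds_spectralRadius T
  have hsr : ENNReal.ofReal r ≤ spectralRadius ℂ T := ge_of_tendsto hgelfand hlow
  obtain ⟨z, hz, hznorm⟩ := spectrum.exists_nnnorm_eq_spectralRadius T
  have hspec_eq : spectrum ℂ T = spectrum ℂ M :=
    AlgEquiv.spectrum_eq (Matrix.toEuclideanCLM (𝕜 := ℂ) (n := Fin d)) M
  have hzM : z ∈ spectrum ℂ M := hspec_eq ▸ hz
  have hrz : r ≤ ‖z‖ := by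
    rw [← hznorm, show (‖z‖₊ : ℝ≥0∞) = ENNReal.ofReal ‖z‖ from (ofReal_norm _).symm] at hsr
    exact (ENNReal.ofReal_le_ofReal_iff (norm_nonneg z)).mp hsr
  obtain ⟨C, hC⟩ := (spectrum.isBounded T).subset_closedBall (0 : ℂ)
  have hbdd : BddAbove ((fun z : ℂ => ‖z‖) '' spectrum ℂ M) := by
    refine ⟨C, fun y hy => ?_⟩
    obtain ⟨w, hw, rfl⟩ := hy
    have hwT : w ∈ spectrum ℂ T := hspec_eq ▸ hw
    have := hC hwT
    rw [Metric.mem_closedBall, dist_zero_right] at this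
    exact this
  calc r ≤ ‖z‖ := hrz
  _ ≤ specRad g := le_csSup hbdd ⟨z, hzM, rfl⟩

section svd
variable {g L R : Matrix (Fin d) (Fin d) ℝ} {a : Fin d → ℝ}

set_option maxHeartbeats 1000000 in
lemma step (h : SVD g L a R) (i0 i1 : Fin d) (hi0 : (i0 : ℕ) = 0) (hi1 : (i1 : ℕ) = 1)
    (b : ℝ) (hb0 : 0 < b) (hb1 : b ≤ 1)
    (hbdef : b = |⟪act L (stdVec i0), act R.transpose (stdVec i0)⟫|)
    (hq : a i1 < a i0 * b ^ 2 / 4)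
    (v : E d) (hv : ‖v‖ = 1) (hvu : 1 - b ^ 2 / 4 ≤ ⟪v, act L (stdVec i0)⟫ ^ 2) :
    a i0 * b / 2 ≤ ‖act g v‖ ∧ ‖‖act g v‖⁻¹ • act g v‖ = 1 ∧
      1 - b ^ 2 / 4 ≤ ⟪‖act g v‖⁻¹ • act g v, act L (stdVec i0)⟫ ^ 2 := by
  set u := act L (stdVec i0) with hu_def
  set n := act R.transpose (stdVec i0) with hn_def
  have hu : ‖u‖ = 1 := norm_u h i0
  have hn : ‖n‖ = 1 := norm_n h i0
  set t := ⟪v, u⟫ with ht_def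
  set m := ⟪v, n⟫ with hm_def
  have ht1 : t ^ 2 ≤ 1 := by
    have := abs_real_inner_le_norm v u
    rw [hv, hu, mul_one] at this
    calc t ^ 2 = |t| ^ 2 := (sq_abs t).symm
    _ ≤ 1 := by nlinarith [abs_nonneg t]
  have hmle : m ^ 2 ≤ 1 := by
    have := abs_real_inner_le_norm v n
    rw [hv, hn, mul_one] at this
    calc m ^ 2 = |m| ^ 2 := (sq_abs m).symm
    _ ≤ 1 := by nlinarith [abs_nonneg m]
  have hcs := cs_bound u n v hu hn hv
  rw [← sq_abs ⟪u, n⟫, ← hbdef] at hcs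
  have hmabs : b / 2 ≤ |m| := scalar1 b t m hb0 hb1 hvu ht1 hcs
  have hmsq : b ^ 2 / 4 ≤ m ^ 2 := by
    have := sq_abs m
    nlinarith [hmabs, abs_nonneg m]
  have hF1 : ⟪act g v, u⟫ = a i0 * m := inner_act_u h i0 v
  have ha0 := h.pos i0
  have h1 : a i0 * b / 2 ≤ ‖act g v‖ := by
    have e1 : a i0 * b / 2 = a i0 * (b / 2) := by ring
    have e2 : a i0 * (b / 2) ≤ a i0 * |m| := mul_le_mul_of_nonneg_left hmabs ha0.le
    have e3 : a i0 * |m| = |⟪act g v, u⟫| := by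
      rw [hF1, abs_mul, abs_of_pos ha0]
    have e4 : |⟪act g v, u⟫| ≤ ‖act g v‖ := by
      have := abs_real_inner_le_norm (act g v) u
      rwa [hu, mul_one] at this
    linarith [e1.le, e1.ge]
  have hrpos : 0 < a i0 * b / 2 := by positivity
  have hgvpos : 0 < ‖act g v‖ := lt_of_lt_of_le hrpos h1
  have hgv0 : act g v ≠ 0 := fun hc => by rw [hc, norm_zero] at hgvpos; exact lt_irrefl _ hgvpos
  refine ⟨h1, norm_smul_inv_norm hgv0, ?_⟩
  have hF2 := norm_act_g_sq_le h i0 i1 hi0 hi1 v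
  rw [hv, one_pow] at hF2
  rw [← hn_def] at hF2
  rw [← hm_def] at hF2
  have hsc2 := scalar2 b m (a i0) (a i1) hb0 hb1 hmsq hmle (h.pos i1) ha0 hq
  have hb4 : (0:ℝ) ≤ 1 - b ^ 2 / 4 := by nlinarith
  have hmain : (1 - b ^ 2 / 4) * ‖act g v‖ ^ 2 ≤ (a i0) ^ 2 * m ^ 2 :=
    le_trans (mul_le_mul_of_nonneg_left hF2 hb4) hsc2
  have hip : ⟪‖act g v‖⁻¹ • act g v, u⟫ = ‖act g v‖⁻¹ * (a i0 * m) := by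
    rw [real_inner_smul_left, hF1]
  rw [hip]
  have hexp : (‖act g v‖⁻¹ * (a i0 * m)) ^ 2 = (a i0) ^ 2 * m ^ 2 / ‖act g v‖ ^ 2 := by
    field_simp
  rw [hexp, le_div_iff₀ (by positivity)]
  linarith [hmain]

lemma iterate (h : SVD g L a R) (i0 i1 : Fin d) (hi0 : (i0 : ℕ) = 0) (hi1 : (i1 : ℕ) = 1)
    (b : ℝ) (hb0 : 0 < b) (hb1 : b ≤ 1)
    (hbdef : b = |⟪act L (stdVec i0), act R.transpose (stdVec i0)⟫|)
    (hq : a i1 < a i0 * b ^ 2 / 4) :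
    ∀ nn : ℕ, (a i0 * b / 2) ^ nn ≤ ‖act (g ^ nn) (act L (stdVec i0))‖ := by
  set u := act L (stdVec i0) with hu_def
  have hu : ‖u‖ = 1 := norm_u h i0
  set r := a i0 * b / 2 with hr_def
  have hrpos : 0 < r := by
    have := h.pos i0
    positivity
  have main : ∀ nn : ℕ, ∃ v : E d, ‖v‖ = 1 ∧ 1 - b ^ 2 / 4 ≤ ⟪v, u⟫ ^ 2 ∧
      act (g ^ nn) u = ‖act (g ^ nn) u‖ • v ∧ r ^ nn ≤ ‖act (g ^ nn) u‖ := by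
    intro nn
    induction nn with
    | zero =>
      refine ⟨u, hu, ?_, ?_, ?_⟩
      · have huu : ⟪u, u⟫ = 1 := by
          rw [real_inner_self_eq_norm_sq, hu]; norm_num
        rw [huu]; nlinarith
      · rw [pow_zero, act_one, hu, one_smul]
      · rw [pow_zero, pow_zero, act_one, hu]
    | succ nn ih =>
      obtain ⟨v, hv1, hv2, hv3, hv4⟩ := ih
      obtain ⟨hs1, hs2, hs3⟩ := step h i0 i1 hi0 hi1 b hb0 hb1 hbdef hq v hv1 hv2
      have hcpos : 0 < ‖act (g ^ nn) u‖ := lt_of_lt_of_le (pow_pos hrpos nn) hv4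
      have hgvpos : 0 < ‖act g v‖ := lt_of_lt_of_le (by positivity) hs1
      set v' := ‖act g v‖⁻¹ • act g v with hv'_def
      have hrec : act (g ^ (nn + 1)) u = (‖act (g ^ nn) u‖ * ‖act g v‖) • v' := by
        calc act (g ^ (nn + 1)) u = act (g * g ^ nn) u := by rw [pow_succ']
        _ = act g (act (g ^ nn) u) := (act_act g (g ^ nn) u).symm
        _ = act g (‖act (g ^ nn) u‖ • v) := congrArg (act g) hv3
        _ = ‖act (g ^ nn) u‖ • act g v := act_smul g _ v
        _ = ‖act (g ^ nn) u‖ • (‖act g v‖ • v') := by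
              rw [hv'_def, smul_inv_smul₀ (ne_of_gt hgvpos)]
        _ = (‖act (g ^ nn) u‖ * ‖act g v‖) • v' := smul_smul _ _ _
      have hnorm : ‖act (g ^ (nn + 1)) u‖ = ‖act (g ^ nn) u‖ * ‖act g v‖ := by
        rw [hrec, norm_smul, hs2, mul_one, Real.norm_eq_abs,
          abs_of_pos (mul_pos hcpos hgvpos)]
      refine ⟨v', hs2, hs3, ?_, ?_⟩
      · rw [hnorm]; exact hrec
      · rw [hnorm, pow_succ]
        exact mul_le_mul hv4 hs1 hrpos.le hcpos.le
  intro nn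
  obtain ⟨v, _, _, _, h4⟩ := main nn
  exact h4

end svd

lemma gapDist_nonneg (v w : E d) : 0 ≤ gapDist v w :=
  div_nonneg (Real.sqrt_nonneg _) (by positivity)

lemma gapDist_le_one (v w : E d) (hv : ‖v‖ = 1) (hw : w ≠ 0) : gapDist v w ≤ 1 := by
  rw [gapDist, div_le_one (mul_pos (by rw [hv]; norm_num) (norm_pos_iff.mpr hw))]
  rw [wedgeNorm]
  calc Real.sqrt (‖v‖ ^ 2 * ‖w‖ ^ 2 - ⟪v, w⟫ ^ 2)
      ≤ Real.sqrt (‖v‖ ^ 2 * ‖w‖ ^ 2) := Real.sqrt_le_sqrt (by nlinarith [sq_nonneg ⟪v, w⟫])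
  _ = ‖v‖ * ‖w‖ := by
      rw [← mul_pow, Real.sqrt_sq (by positivity)]

lemma exists_perp (hd : 2 ≤ d) (n : E d) (hn : ‖n‖ = 1) :
    ∃ x : E d, x ≠ 0 ∧ ⟪x, n⟫ = 0 := by
  have hnn : ⟪n, n⟫ = 1 := by rw [real_inner_self_eq_norm_sq, hn]; norm_num
  set i0 : Fin d := ⟨0, by omega⟩
  set i1 : Fin d := ⟨1, by omega⟩
  have hperp : ∀ i : Fin d, ⟪stdVec i - ⟪stdVec i, n⟫ • n, n⟫ = 0 := by
    intro i
    rw [inner_sub_left, real_inner_smul_left, hnn, mul_one, sub_self]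
  by_cases h0 : stdVec i0 - ⟪stdVec i0, n⟫ • n = 0
  · by_cases h1 : stdVec i1 - ⟪stdVec i1, n⟫ • n = 0
    · exfalso
      have e0 : stdVec i0 = ⟪stdVec i0, n⟫ • n := by
        rw [← sub_eq_zero]; exact h0
      have e1 : stdVec i1 = ⟪stdVec i1, n⟫ • n := by
        rw [← sub_eq_zero]; exact h1
      have hne : i0 ≠ i1 := by
        intro hc
        have : (0 : ℕ) = 1 := congrArg Fin.val hc
        omega
      have hinner : ⟪stdVec i0, stdVec i1⟫ = 0 := by
        rw [inner_stdVec, stdVec, EuclideanSpace.single_apply, if_neg (Ne.symm hne)]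
      have hinner2 : ⟪stdVec i0, stdVec i1⟫ = ⟪stdVec i0, n⟫ * ⟪stdVec i1, n⟫ := by
        nth_rewrite 1 [e0, e1]
        rw [real_inner_smul_left, real_inner_smul_right, hnn, mul_one]
      have hc0 : ⟪stdVec i0, n⟫ ≠ 0 := by
        intro hc
        rw [hc, zero_smul] at e0
        have := norm_stdVec (d := d) i0
        rw [e0, norm_zero] at this
        norm_num at this
      have hc1 : ⟪stdVec i1, n⟫ ≠ 0 := by
        intro hc
        rw [hc, zero_smul] at e1
        have := norm_stdVec (d := d) i1
        rw [e1, norm_zero] at this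
        norm_num at this
      rw [hinner] at hinner2
      exact hc0 (by
        rcases mul_eq_zero.mp hinner2.symm with h | h
        · exact h
        · exact absurd h hc1)
    · exact ⟨_, h1, hperp i1⟩
  · exact ⟨_, h0, hperp i0⟩

lemma csInf_le_abs (hd : 2 ≤ d) (u n : E d) (hu : ‖u‖ = 1) (hn : ‖n‖ = 1) :
    sInf {r | ∃ x : E d, x ≠ 0 ∧ ⟪x, n⟫ = 0 ∧ r = gapDist u x} ≤ |⟪u, n⟫| := by
  set S := {r | ∃ x : E d, x ≠ 0 ∧ ⟪x, n⟫ = 0 ∧ r = gapDist u x} with hS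
  have hbdd : BddBelow S := by
    refine ⟨0, ?_⟩
    rintro s ⟨x, hx, hxn, rfl⟩
    exact gapDist_nonneg u x
  set t := ⟪u, n⟫ with ht_def
  have hnn : ⟪n, n⟫ = 1 := by rw [real_inner_self_eq_norm_sq, hn]; norm_num
  have huu : ⟪u, u⟫ = 1 := by rw [real_inner_self_eq_norm_sq, hu]; norm_num
  have ht1 : t ^ 2 ≤ 1 := by
    have := abs_real_inner_le_norm u n
    rw [hu, hn, mul_one] at this
    calc t ^ 2 = |t| ^ 2 := (sq_abs t).symm
    _ ≤ 1 := by nlinarith [abs_nonneg t]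
  rcases eq_or_lt_of_le ht1 with heq | hlt
  · obtain ⟨x, hx0, hxn⟩ := exists_perp hd n hn
    have h1 : gapDist u x ≤ 1 := gapDist_le_one u x hu hx0
    have h2 : |t| = 1 := by
      have e : |t| = Real.sqrt (t ^ 2) := (Real.sqrt_sq_eq_abs t).symm
      rw [heq, Real.sqrt_one] at e
      exact e
    refine le_trans (csInf_le hbdd ⟨x, hx0, hxn, rfl⟩) ?_
    rw [h2]; exact h1
  · set x := u - t • n with hx_def
    have hxn : ⟪x, n⟫ = 0 := by
      rw [hx_def, inner_sub_left, real_inner_smul_left, hnn, mul_one, sub_self]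
    have hnx : ‖x‖ ^ 2 = 1 - t ^ 2 := by
      rw [hx_def, norm_sub_sq_real, real_inner_smul_right, norm_smul, hu, hn]
      have e : ⟪u, n⟫ = t := rfl
      rw [e, Real.norm_eq_abs, mul_one, sq_abs]
      ring
    have hx0 : x ≠ 0 := by
      intro hc
      rw [hc, norm_zero] at hnx
      nlinarith
    have hux : ⟪u, x⟫ = 1 - t ^ 2 := by
      rw [hx_def, inner_sub_right, real_inner_smul_right, huu]
      have e : ⟪u, n⟫ = t := rfl
      rw [e]; ring
    have hxnorm : ‖x‖ = Real.sqrt (1 - t ^ 2) := by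
      rw [← hnx, Real.sqrt_sq (norm_nonneg x)]
    have hgap : gapDist u x = |t| := by
      rw [gapDist, wedgeNorm, hu, hux, hnx]
      have e1 : (1:ℝ) ^ 2 * (1 - t ^ 2) - (1 - t ^ 2) ^ 2 = (1 - t ^ 2) * t ^ 2 := by ring
      rw [e1, Real.sqrt_mul (by nlinarith) (t ^ 2), Real.sqrt_sq_eq_abs, hxnorm]
      have hs0 : 0 < Real.sqrt (1 - t ^ 2) := Real.sqrt_pos.mpr (by nlinarith)
      field_simp
    refine le_trans (csInf_le hbdd ⟨x, hx0, hxn, rfl⟩) ?_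
    rw [hgap]

lemma main_aux (hd : 2 ≤ d) (g L R : Matrix (Fin d) (Fin d) ℝ)
    (a : Fin d → ℝ) (h : SVD g L a R) (i0 i1 : Fin d)
    (hi0 : (i0 : ℕ) = 0) (hi1 : (i1 : ℕ) = 1)
    (hyp : 2 * Real.sqrt (a i1 / a i0) <
      sInf {r | ∃ x : E d, x ≠ 0 ∧ ⟪x, act R.transpose (stdVec i0)⟫ = 0 ∧
          r = gapDist (act L (stdVec i0)) x}) :
    sInf {r | ∃ x : E d, x ≠ 0 ∧ ⟪x, act R.transpose (stdVec i0)⟫ = 0 ∧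
        r = gapDist (act L (stdVec i0)) x} / 2 ≤ specRad g / opNorm g := by
  set u := act L (stdVec i0) with hu_def
  set n := act R.transpose (stdVec i0) with hn_def
  have hu : ‖u‖ = 1 := norm_u h i0
  have hn : ‖n‖ = 1 := norm_n h i0
  set c := sInf {r | ∃ x : E d, x ≠ 0 ∧ ⟪x, n⟫ = 0 ∧ r = gapDist u x} with hc_def
  have hq0 : 0 < a i1 / a i0 := div_pos (h.pos i1) (h.pos i0)
  have hsqq : 0 < Real.sqrt (a i1 / a i0) := Real.sqrt_pos.mpr hq0
  have hcpos : 0 < c := lt_trans (by positivity) hyp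
  set b := |⟪u, n⟫| with hb_def
  have hcb : c ≤ b := csInf_le_abs hd u n hu hn
  have hbpos : 0 < b := lt_of_lt_of_le hcpos hcb
  have hb1 : b ≤ 1 := by
    have := abs_real_inner_le_norm u n
    rwa [hu, hn, mul_one] at this
  have hq : a i1 < a i0 * b ^ 2 / 4 := by
    have h1 : 2 * Real.sqrt (a i1 / a i0) < b := lt_of_lt_of_le hyp hcb
    have h2 : Real.sqrt (a i1 / a i0) ^ 2 = a i1 / a i0 := Real.sq_sqrt hq0.le
    have h3 : a i1 / a i0 < b ^ 2 / 4 := by nlinarith [hsqq]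
    have h4 := (div_lt_iff₀ (h.pos i0)).mp h3
    nlinarith [h4]
  set r := a i0 * b / 2 with hr_def
  have hrpos : 0 < r := by
    have := h.pos i0
    positivity
  have hiter := iterate h i0 i1 hi0 hi1 b hbpos hb1 hb_def hq
  have hspec : r ≤ specRad g := specRad_ge g u hu r hrpos hiter
  have hople : opNorm g ≤ a i0 := by
    show ‖(Matrix.toEuclideanLin g).toContinuousLinearMap‖ ≤ a i0
    apply ContinuousLinearMap.opNorm_le_bound _ (h.pos i0).le
    intro v
    exact norm_act_g_le h i0 hi0 v
  have hoppos : 0 < opNorm g := by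
    have h1 : ⟪act g u, u⟫ = a i0 * ⟪u, n⟫ := inner_act_u h i0 u
    have e3 : a i0 * b = |⟪act g u, u⟫| := by
      rw [h1, abs_mul, abs_of_pos (h.pos i0)]
    have e4 : |⟪act g u, u⟫| ≤ ‖act g u‖ := by
      have := abs_real_inner_le_norm (act g u) u
      rwa [hu, mul_one] at this
    have e5 : ‖act g u‖ ≤ opNorm g := by
      have := ((Matrix.toEuclideanLin g).toContinuousLinearMap).le_opNorm u
      rw [hu, mul_one] at this
      exact this
    have : 0 < a i0 * b := mul_pos (h.pos i0) hbpos
    linarith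
  rw [le_div_iff₀ hoppos]
  calc c / 2 * opNorm g ≤ b / 2 * a i0 := by
        apply mul_le_mul (by linarith) hople hoppos.le (by positivity)
  _ = r := by rw [hr_def]; ring
  _ ≤ specRad g := hspec

end Stmt4Aux

/-- If the gap distance between the direction of maximum growth `u(g) = [L e₁]` and the
hyperplane of least growth `s(g) = { w̄ : ⟪w, R* e₁⟫ = 0 }` exceeds `2 √(a₂(g)/a₁(g))`, then
`d(u(g), s(g))/2 ≤ ρ(g)/‖g‖`. -/
theorem stmt_4 {d : ℕ} (hd : 2 ≤ d) (g L R : Matrix (Fin d) (Fin d) ℝ)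
    (hg : IsUnit g) (a : Fin d → ℝ) (h : SVD g L a R)
    (hyp : 2 * Real.sqrt (a ⟨1, by omega⟩ / a ⟨0, by omega⟩) <
      sInf {r | ∃ x : E d, x ≠ 0 ∧ ⟪x, act R.transpose (stdVec ⟨0, by omega⟩)⟫ = 0 ∧
          r = gapDist (act L (stdVec ⟨0, by omega⟩)) x}) :
    sInf {r | ∃ x : E d, x ≠ 0 ∧ ⟪x, act R.transpose (stdVec ⟨0, by omega⟩)⟫ = 0 ∧
        r = gapDist (act L (stdVec ⟨0, by omega⟩)) x} / 2 ≤
      specRad g / opNorm g := by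
  exact Stmt4Aux.main_aux hd g L R a h ⟨0, by omega⟩ ⟨1, by omega⟩ rfl rfl hyp
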